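/- Let f : ℝ₊ˣ → ℝ be continuous, with f(x) = O(x^{-A}) as x → +∞ for every A > 0, and f(x) = O(x^{-c}) as x → 0⁺ for some c > 0. Fix ε = ±1 and set h(x) = f(x) - ε x⁻¹ f(x⁻¹). Then for every s with Re(s) > c, the Mellin transform M(f)(s) = ∫₀^∞ f(x) x^{s-1} dx converges absolutely and satisfies M(f)(s) = ∫₁^∞ f(x) x^{s-1} dx + ε ∫₁^∞ f(x) x^{-s} dx + ∫₀¹ h(x) x^{s-1} dx. -/

import Mathlib

open MeasureTheory Set Complex

theorem stmt_2 (f : ℝ → ℝ) (c : ℝ) (hc : 0 < c) (ε : ℝ) (hε : ε = 1 ∨ ε = -1)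
    (hcont : ContinuousOn f (Set.Ioi 0))
    (hdecay : ∀ A : ℝ, 0 < A → ∃ C : ℝ, ∀ x : ℝ, 1 ≤ x → |f x| ≤ C * x ^ (-A))
    (h0 : ∃ C : ℝ, ∀ x ∈ Set.Ioc (0:ℝ) 1, |f x| ≤ C * x ^ (-c))
    (h : ℝ → ℝ) (hdef : ∀ x : ℝ, 0 < x → h x = f x - ε * x⁻¹ * f x⁻¹)
    (s : ℂ) (hs : c < s.re) :
    MeasureTheory.IntegrableOn (fun x : ℝ => (f x : ℂ) * (x:ℂ) ^ (s-1)) (Set.Ioi 0) ∧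
    ∫ x in Set.Ioi (0:ℝ), (f x : ℂ) * (x:ℂ) ^ (s-1) =
      (∫ x in Set.Ioi (1:ℝ), (f x : ℂ) * (x:ℂ) ^ (s-1)) +
      (ε:ℂ) * (∫ x in Set.Ioi (1:ℝ), (f x : ℂ) * (x:ℂ) ^ (-s)) +
      ∫ x in Set.Ioc (0:ℝ) 1, (h x : ℂ) * (x:ℂ) ^ (s-1) := by
  obtain ⟨C0, hC0⟩ := h0
  obtain ⟨C1, hC1⟩ := hdecay 1 one_pos
  obtain ⟨C2, hC2⟩ := hdecay (s.re + 1) (by linarith)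
  have hsc : (0:ℝ) < s.re := lt_trans hc hs
  -- continuity of the integrand
  have hmeas : ∀ (w : ℂ), ContinuousOn (fun x : ℝ => (f x : ℂ) * (x:ℂ) ^ w) (Set.Ioi 0) := by
    intro w
    refine (Complex.continuous_ofReal.comp_continuousOn hcont).mul fun x hx => ?_
    exact ((continuousAt_cpow_const (Or.inl (by exact_mod_cast hx))).comp
      Complex.continuous_ofReal.continuousAt).continuousWithinAt
  -- norm of the integrand
  have hnorm : ∀ (w : ℂ) (x : ℝ), 0 < x → ‖(f x : ℂ) * (x:ℂ) ^ w‖ = |f x| * x ^ w.re := by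
    intro w x hx
    rw [norm_mul, Complex.norm_real, Real.norm_eq_abs,
      Complex.norm_cpow_eq_rpow_re_of_pos hx]
  -- integrability on (0,1]
  have hI1 : MeasureTheory.IntegrableOn (fun x : ℝ => (f x : ℂ) * (x:ℂ) ^ (s-1))
      (Set.Ioc 0 1) := by
    refine MeasureTheory.Integrable.mono' (g := fun x => C0 * x ^ (s.re - c - 1))
      ((intervalIntegral.intervalIntegrable_rpow' (by linarith) (a := 0) (b := 1)).1.const_mul C0)
      (((hmeas (s-1)).mono Set.Ioc_subset_Ioi_self).aestronglyMeasurable measurableSet_Ioc) ?_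
    filter_upwards [MeasureTheory.ae_restrict_mem measurableSet_Ioc] with x hx
    rw [hnorm _ _ hx.1]
    calc |f x| * x ^ (s-1).re ≤ (C0 * x ^ (-c)) * x ^ (s-1).re :=
          mul_le_mul_of_nonneg_right (hC0 x hx) (Real.rpow_nonneg hx.1.le _)
      _ = C0 * x ^ (s.re - c - 1) := by
          rw [mul_assoc, ← Real.rpow_add hx.1, Complex.sub_re, Complex.one_re]
          congr 1
          ring_nf
  -- integrability on (1,∞), exponent s-1
  have hI2 : MeasureTheory.IntegrableOn (fun x : ℝ => (f x : ℂ) * (x:ℂ) ^ (s-1))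
      (Set.Ioi 1) := by
    refine MeasureTheory.Integrable.mono' (g := fun x => C2 * x ^ (-2 : ℝ))
      ((integrableOn_Ioi_rpow_of_lt (by norm_num) one_pos).const_mul C2)
      (((hmeas (s-1)).mono (Set.Ioi_subset_Ioi zero_le_one)).aestronglyMeasurable
        measurableSet_Ioi) ?_
    filter_upwards [MeasureTheory.ae_restrict_mem measurableSet_Ioi] with x hx
    have hx0 : (0:ℝ) < x := lt_trans one_pos hx
    rw [hnorm _ _ hx0]
    calc |f x| * x ^ (s-1).re ≤ (C2 * x ^ (-(s.re + 1))) * x ^ (s-1).re :=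
          mul_le_mul_of_nonneg_right (hC2 x hx.le) (Real.rpow_nonneg hx0.le _)
      _ = C2 * x ^ (-2 : ℝ) := by
          rw [mul_assoc, ← Real.rpow_add hx0, Complex.sub_re, Complex.one_re]
          congr 1
          ring_nf
  -- integrability on (1,∞), exponent -s
  have hI3 : MeasureTheory.IntegrableOn (fun x : ℝ => (f x : ℂ) * (x:ℂ) ^ (-s))
      (Set.Ioi 1) := by
    refine MeasureTheory.Integrable.mono' (g := fun x => C1 * x ^ (-1 - s.re))
      ((integrableOn_Ioi_rpow_of_lt (by linarith) one_pos).const_mul C1)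
      (((hmeas (-s)).mono (Set.Ioi_subset_Ioi zero_le_one)).aestronglyMeasurable
        measurableSet_Ioi) ?_
    filter_upwards [MeasureTheory.ae_restrict_mem measurableSet_Ioi] with x hx
    have hx0 : (0:ℝ) < x := lt_trans one_pos hx
    rw [hnorm _ _ hx0]
    calc |f x| * x ^ (-s).re ≤ (C1 * x ^ (-1 : ℝ)) * x ^ (-s).re :=
          mul_le_mul_of_nonneg_right (hC1 x hx.le) (Real.rpow_nonneg hx0.le _)
      _ = C1 * x ^ (-1 - s.re) := by
          rw [mul_assoc, ← Real.rpow_add hx0, Complex.neg_re, sub_eq_add_neg]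
  -- the auxiliary function appearing from the functional equation
  set g2 : ℝ → ℂ := fun x => ((x⁻¹ * f x⁻¹ : ℝ) : ℂ) * (x:ℂ) ^ (s-1) with hg2
  have hcont2 : ContinuousOn (fun x : ℝ => x⁻¹ * f x⁻¹) (Set.Ioi 0) := by
    have hinv : ContinuousOn (fun x : ℝ => x⁻¹) (Set.Ioi 0) :=
      continuousOn_inv₀.mono fun x hx => ne_of_gt hx
    exact hinv.mul (hcont.comp hinv fun x hx => Set.mem_Ioi.2 (inv_pos.2 hx))
  have hmeas2 : ContinuousOn g2 (Set.Ioi 0) := by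
    refine (Complex.continuous_ofReal.comp_continuousOn hcont2).mul fun x hx => ?_
    exact ((continuousAt_cpow_const (Or.inl (by exact_mod_cast hx))).comp
      Complex.continuous_ofReal.continuousAt).continuousWithinAt
  have hI4 : MeasureTheory.IntegrableOn g2 (Set.Ioc 0 1) := by
    refine MeasureTheory.Integrable.mono' (g := fun x => C1 * x ^ (s.re - 1))
      ((intervalIntegral.intervalIntegrable_rpow' (by linarith) (a := 0) (b := 1)).1.const_mul C1)
      ((hmeas2.mono Set.Ioc_subset_Ioi_self).aestronglyMeasurable measurableSet_Ioc) ?_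
    filter_upwards [MeasureTheory.ae_restrict_mem measurableSet_Ioc] with x hx
    have hx0 : (0:ℝ) < x := hx.1
    have h1x : (1:ℝ) ≤ x⁻¹ := one_le_inv_iff₀.2 ⟨hx0, hx.2⟩
    have hb := hC1 x⁻¹ h1x
    rw [Real.rpow_neg_one, inv_inv] at hb
    simp only [hg2]
    rw [norm_mul, Complex.norm_real, Real.norm_eq_abs,
      Complex.norm_cpow_eq_rpow_re_of_pos hx0, abs_mul, abs_of_pos (inv_pos.2 hx0)]
    calc x⁻¹ * |f x⁻¹| * x ^ (s-1).re ≤ x⁻¹ * (C1 * x) * x ^ (s-1).re := by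
          refine mul_le_mul_of_nonneg_right ?_ (Real.rpow_nonneg hx0.le _)
          exact mul_le_mul_of_nonneg_left hb (inv_pos.2 hx0).le
      _ = C1 * x ^ (s.re - 1) := by
          rw [Complex.sub_re, Complex.one_re]
          field_simp
  -- the substitution x ↦ x⁻¹
  have himg : (fun x : ℝ => x⁻¹) '' Set.Ioi 1 = Set.Ioo 0 1 := by
    ext y
    constructor
    · rintro ⟨x, hx, rfl⟩
      exact ⟨inv_pos.2 (lt_trans one_pos hx), inv_lt_one_of_one_lt₀ hx⟩
    · rintro ⟨hy0, hy1⟩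
      exact ⟨y⁻¹, (one_lt_inv_iff₀).2 ⟨hy0, hy1⟩, inv_inv y⟩
  have hsubst : ∫ x in Set.Ioc (0:ℝ) 1, g2 x
      = ∫ x in Set.Ioi (1:ℝ), (f x : ℂ) * (x:ℂ) ^ (-s) := by
    rw [MeasureTheory.integral_Ioc_eq_integral_Ioo, ← himg,
      MeasureTheory.integral_image_eq_integral_abs_deriv_smul measurableSet_Ioi
        (fun x hx => (hasDerivAt_inv (ne_of_gt (lt_trans one_pos hx))).hasDerivWithinAt)
        (fun a _ b _ hab => inv_injective hab)]
    refine MeasureTheory.setIntegral_congr_fun measurableSet_Ioi fun x hx => ?_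
    have hx0 : (0:ℝ) < x := lt_trans one_pos hx
    have hX : (x:ℂ) ≠ 0 := Complex.ofReal_ne_zero.2 (ne_of_gt hx0)
    have harg : Complex.arg (x:ℂ) ≠ Real.pi := by
      rw [Complex.arg_ofReal_of_nonneg hx0.le]
      exact Real.pi_ne_zero.symm
    simp only [hg2, inv_inv, abs_neg, abs_inv, _root_.sq_abs, real_smul]
    push_cast
    rw [Complex.inv_cpow _ _ harg, ← Complex.cpow_neg, neg_sub,
      show (1:ℂ) - s = 1 + -s from by ring, Complex.cpow_add _ _ hX, Complex.cpow_one]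
    have hx2 : ((x:ℂ)^2) ≠ 0 := pow_ne_zero _ hX
    field_simp
    rw [abs_of_pos (pow_pos hx0 2)]
    push_cast
    ring
  -- split the integrand on (0,1]
  have hsplit : MeasureTheory.IntegrableOn (fun x : ℝ => (h x : ℂ) * (x:ℂ) ^ (s-1))
      (Set.Ioc 0 1) := by
    refine MeasureTheory.IntegrableOn.congr_fun (hI1.sub (hI4.const_mul (ε:ℂ)))
      (fun x hx => ?_) measurableSet_Ioc
    simp only [Pi.sub_apply, hg2]
    rw [hdef x hx.1]
    push_cast
    ring
  have heq1 : ∫ x in Set.Ioc (0:ℝ) 1, (f x : ℂ) * (x:ℂ) ^ (s-1)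
      = (∫ x in Set.Ioc (0:ℝ) 1, (h x : ℂ) * (x:ℂ) ^ (s-1))
        + (ε:ℂ) * ∫ x in Set.Ioc (0:ℝ) 1, g2 x := by
    rw [← MeasureTheory.integral_const_mul, ← MeasureTheory.integral_add hsplit
      (hI4.const_mul (ε:ℂ))]
    refine MeasureTheory.setIntegral_congr_fun measurableSet_Ioc fun x hx => ?_
    simp only [hg2]
    rw [hdef x hx.1]
    push_cast
    ring
  -- putting it together
  have hunion : Set.Ioc (0:ℝ) 1 ∪ Set.Ioi 1 = Set.Ioi 0 := Set.Ioc_union_Ioi_eq_Ioi zero_le_one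
  have htot : MeasureTheory.IntegrableOn (fun x : ℝ => (f x : ℂ) * (x:ℂ) ^ (s-1))
      (Set.Ioi 0) := by
    rw [← hunion]
    exact hI1.union hI2
  refine ⟨htot, ?_⟩
  rw [← hunion, MeasureTheory.setIntegral_union (Set.Ioc_disjoint_Ioi le_rfl)
    measurableSet_Ioi hI1 hI2, heq1, hsubst]
  ring
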